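/- arXiv:2605.18730 — 2 statements merged into one kernel-verified Lean document; each statement's English description precedes it below -/
import Mathlib

section
/- Let 0 < r₁ ≤ r_* < R, let τ > 0 and C₀ ≥ 0, and let φ : ℝ → ℝ be continuous and nonnegative on [r₁, R]. Suppose Y : ℝ → ℝ is continuous and nonnegative on [0, R − r_*], satisfies Y(0) = 0, is differentiable on (0, R − r_*), and satisfies deriv Y ρ ≤ (1/(R − ρ) + C₀·(R − ρ)^(−1−τ))·Y(ρ) + φ(R − ρ)/(R − ρ) for all ρ ∈ (0, R − r_*). Then for all ρ ∈ [0, R − r_*]: (R − ρ)·Y(ρ) ≤ exp(C₀·r₁^(−τ)/τ)·∫_{R−ρ}^{R} φ(σ) dσ. -/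
open Set

private lemma prim_hasDerivAt (R : ℝ) (f : ℝ → ℝ) (hf : Continuous f) (ρ : ℝ) :
    HasDerivAt (fun ρ => ∫ σ in (R - ρ)..R, f σ) (f (R - ρ)) ρ := by
  have h1 : HasDerivAt (fun u => ∫ σ in R..u, f σ) (f (R - ρ)) (R - ρ) :=
    intervalIntegral.integral_hasDerivAt_right (hf.intervalIntegrable _ _)
      hf.stronglyMeasurable.stronglyMeasurableAtFilter hf.continuousAt
  have h2 : HasDerivAt (fun x : ℝ => R - x) (-1) ρ := (hasDerivAt_id ρ).const_sub R
  have h3 := (h1.comp ρ h2).neg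
  have he : (fun ρ => ∫ σ in (R - ρ)..R, f σ) = fun ρ => -∫ σ in R..(R - ρ), f σ :=
    funext fun ρ => (intervalIntegral.integral_symm _ _)
  rw [he]
  exact h3.congr_deriv (by ring)



/-- Integrating-factor ODE comparison underlying the tangential gradient estimate:
if `Y(0) = 0`, `Y ≥ 0`, and
`Y'(ρ) ≤ (1/(R−ρ) + C₀(R−ρ)^{−1−τ})·Y(ρ) + φ(R−ρ)/(R−ρ)` on `(0, R − r_*)`,
then `(R−ρ)·Y(ρ) ≤ exp(C₀ r₁^{−τ}/τ)·∫_{R−ρ}^{R} φ(σ) dσ`. -/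
theorem gradient_estimate_ode_comparison (r₁ rstar R τ C₀ : ℝ)
    (hr₁ : 0 < r₁) (h₁ : r₁ ≤ rstar) (hrR : rstar < R)
    (hτ : 0 < τ) (hC₀ : 0 ≤ C₀)
    (φ : ℝ → ℝ) (hφc : ContinuousOn φ (Set.Icc r₁ R))
    (hφ0 : ∀ σ ∈ Set.Icc r₁ R, 0 ≤ φ σ)
    (Y : ℝ → ℝ) (hYc : ContinuousOn Y (Set.Icc 0 (R - rstar)))
    (hY0 : ∀ ρ ∈ Set.Icc (0:ℝ) (R - rstar), 0 ≤ Y ρ)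
    (hY00 : Y 0 = 0)
    (hdiff : ∀ ρ ∈ Set.Ioo (0:ℝ) (R - rstar), DifferentiableAt ℝ Y ρ)
    (hineq : ∀ ρ ∈ Set.Ioo (0:ℝ) (R - rstar),
      deriv Y ρ ≤ (1/(R - ρ) + C₀ * (R - ρ) ^ (-1 - τ)) * Y ρ + φ (R - ρ) / (R - ρ)) :
    ∀ ρ ∈ Set.Icc (0:ℝ) (R - rstar),
      (R - ρ) * Y ρ ≤ Real.exp (C₀ * r₁ ^ (-τ) / τ) * ∫ σ in (R - ρ)..R, φ σ := by
  have hr₁R : r₁ < R := lt_of_le_of_lt h₁ hrR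
  -- membership fact
  have hmem : ∀ ρ ∈ Icc (0:ℝ) (R - rstar), R - ρ ∈ Icc r₁ R := by
    intro ρ hρ
    exact ⟨by have := hρ.2; linarith, by have := hρ.1; linarith⟩
  -- clamp
  set c : ℝ → ℝ := fun σ => max r₁ (min σ R) with hcdef
  have hc_cont : Continuous c := continuous_const.max (continuous_id.min continuous_const)
  have hc_mem : ∀ σ, c σ ∈ Icc r₁ R :=
    fun σ => ⟨le_max_left _ _, max_le hr₁R.le (min_le_right _ _)⟩
  have hc_eq : ∀ σ ∈ Icc r₁ R, c σ = σ := by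
    intro σ hσ; simp [hcdef, min_eq_left hσ.2, max_eq_right hσ.1]
  set ψ : ℝ → ℝ := fun σ => φ (c σ) with hψdef
  have hψc : Continuous ψ := hφc.comp_continuous hc_cont hc_mem
  have hψ0 : ∀ σ, 0 ≤ ψ σ := fun σ => hφ0 _ (hc_mem σ)
  have hψeq : ∀ σ ∈ Icc r₁ R, ψ σ = φ σ := by
    intro σ hσ; simp only [hψdef]; rw [hc_eq σ hσ]
  -- modified kernel
  set g : ℝ → ℝ := fun σ => (max r₁ σ) ^ (-1 - τ) with hgdef
  have hgc : Continuous g :=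
    (continuous_const.max continuous_id).rpow_const
      (fun x => Or.inl (ne_of_gt (lt_of_lt_of_le hr₁ (le_max_left _ _))))
  have hg0 : ∀ σ, 0 ≤ g σ :=
    fun σ => Real.rpow_nonneg (le_trans hr₁.le (le_max_left _ _)) _
  have hgeq : ∀ σ, r₁ ≤ σ → g σ = σ ^ (-1 - τ) := by
    intro σ h; simp [hgdef, max_eq_right h]
  -- primitives
  set Φ : ℝ → ℝ := fun ρ => ∫ σ in (R - ρ)..R, ψ σ with hΦdef
  set A : ℝ → ℝ := fun ρ => C₀ * ∫ σ in (R - ρ)..R, g σ with hAdef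
  have hΦd : ∀ ρ : ℝ, HasDerivAt Φ (ψ (R - ρ)) ρ := prim_hasDerivAt R ψ hψc
  have hAd : ∀ ρ : ℝ, HasDerivAt A (C₀ * g (R - ρ)) ρ :=
    fun ρ => (prim_hasDerivAt R g hgc ρ).const_mul C₀
  have hΦnn : ∀ ρ ∈ Icc (0:ℝ) (R - rstar), 0 ≤ Φ ρ := by
    intro ρ hρ
    exact intervalIntegral.integral_nonneg (by have := hρ.1; linarith)
      (fun u _ => hψ0 u)
  have hAnn : ∀ ρ ∈ Icc (0:ℝ) (R - rstar), 0 ≤ A ρ := by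
    intro ρ hρ
    exact mul_nonneg hC₀ (intervalIntegral.integral_nonneg (by have := hρ.1; linarith)
      (fun u _ => hg0 u))
  have hAle : ∀ ρ ∈ Icc (0:ℝ) (R - rstar), A ρ ≤ C₀ * r₁ ^ (-τ) / τ := by
    intro ρ hρ
    have hr : r₁ ≤ R - ρ := (hmem ρ hρ).1
    have hrR' : R - ρ ≤ R := (hmem ρ hρ).2
    have hrpos : (0:ℝ) < R - ρ := lt_of_lt_of_le hr₁ hr
    have hcongr : (∫ σ in (R - ρ)..R, g σ) = ∫ σ in (R - ρ)..R, σ ^ (-1 - τ) := by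
      apply intervalIntegral.integral_congr
      intro σ hσ
      rw [Set.uIcc_of_le hrR'] at hσ
      exact hgeq σ (le_trans hr hσ.1)
    have hval : (∫ σ in (R - ρ)..R, σ ^ (-1 - τ)) =
        (R ^ (-1 - τ + 1) - (R - ρ) ^ (-1 - τ + 1)) / (-1 - τ + 1) := by
      apply integral_rpow
      refine Or.inr ⟨by intro h; linarith, ?_⟩
      rw [Set.uIcc_of_le hrR']
      intro h; exact absurd h.1 (by linarith)
    have hexp : -1 - τ + 1 = -τ := by ring
    have hb1 : (R - ρ) ^ (-τ) ≤ r₁ ^ (-τ) :=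
      Real.rpow_le_rpow_of_nonpos hr₁ hr (by linarith)
    have hb2 : (0:ℝ) ≤ R ^ (-τ) := Real.rpow_nonneg (by linarith) _
    have : (∫ σ in (R - ρ)..R, g σ) ≤ r₁ ^ (-τ) / τ := by
      rw [hcongr, hval, hexp]
      have h9 : (R ^ (-τ) - (R - ρ) ^ (-τ)) / (-τ) = ((R - ρ) ^ (-τ) - R ^ (-τ)) / τ := by
        rw [div_neg, ← neg_div, neg_sub]
      rw [h9]
      gcongr
      linarith
    calc A ρ ≤ C₀ * (r₁ ^ (-τ) / τ) := mul_le_mul_of_nonneg_left this hC₀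
      _ = C₀ * r₁ ^ (-τ) / τ := by ring
  -- the comparison function
  set W : ℝ → ℝ := fun ρ => Real.exp (-A ρ) * ((R - ρ) * Y ρ) with hWdef
  set H : ℝ → ℝ := fun ρ => Φ ρ - W ρ with hHdef
  have hHc : ContinuousOn H (Icc 0 (R - rstar)) := by
    apply ContinuousOn.sub
    · exact fun x _ => ((hΦd x).continuousAt).continuousWithinAt
    · have hAcont : Continuous A := Differentiable.continuous (fun x => (hAd x).differentiableAt)
      exact ((Real.continuous_exp.comp hAcont.neg).continuousOn).mul
        (((continuous_const.sub continuous_id).continuousOn).mul hYc)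
  -- derivative facts for H on the interior
  have hHd : ∀ ρ ∈ Ioo (0:ℝ) (R - rstar),
      HasDerivAt H (ψ (R - ρ) -
        (Real.exp (-A ρ) * (-(C₀ * g (R - ρ))) * ((R - ρ) * Y ρ) +
         Real.exp (-A ρ) * ((-1) * Y ρ + (R - ρ) * deriv Y ρ))) ρ := by
    intro ρ hρ
    have hY' : HasDerivAt Y (deriv Y ρ) ρ := (hdiff ρ hρ).hasDerivAt
    have hRρ : HasDerivAt (fun x : ℝ => R - x) (-1) ρ := (hasDerivAt_id ρ).const_sub R
    have hprod : HasDerivAt (fun x => (R - x) * Y x)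
        ((-1) * Y ρ + (R - ρ) * deriv Y ρ) ρ := hRρ.mul hY'
    have hexp' : HasDerivAt (fun x => Real.exp (-A x))
        (Real.exp (-A ρ) * (-(C₀ * g (R - ρ)))) ρ := ((hAd ρ).neg).exp
    exact (hΦd ρ).sub (hexp'.mul hprod)
  have hHderiv_nonneg : ∀ ρ ∈ Ioo (0:ℝ) (R - rstar), 0 ≤ deriv H ρ := by
    intro ρ hρ
    have hρ' : ρ ∈ Icc (0:ℝ) (R - rstar) := ⟨hρ.1.le, hρ.2.le⟩
    have hr : r₁ ≤ R - ρ := (hmem ρ hρ').1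
    have hrpos : (0:ℝ) < R - ρ := lt_of_lt_of_le hr₁ hr
    have hgr : g (R - ρ) = (R - ρ) ^ (-1 - τ) := hgeq _ hr
    have hpow : (R - ρ) ^ (-1 - τ) * (R - ρ) = (R - ρ) ^ (-τ) := by
      calc (R - ρ) ^ (-1 - τ) * (R - ρ)
          = (R - ρ) ^ (-1 - τ) * (R - ρ) ^ (1:ℝ) := by rw [Real.rpow_one]
        _ = (R - ρ) ^ (-1 - τ + 1) := (Real.rpow_add hrpos _ _).symm
        _ = (R - ρ) ^ (-τ) := by congr 1; ring
    have hi := hineq ρ hρ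
    have hmul : (R - ρ) * deriv Y ρ ≤
        Y ρ + C₀ * (R - ρ) ^ (-τ) * Y ρ + φ (R - ρ) := by
      have h10 : (R - ρ) * ((1/(R - ρ) + C₀ * (R - ρ) ^ (-1 - τ)) * Y ρ + φ (R - ρ) / (R - ρ))
          = Y ρ + C₀ * (R - ρ) ^ (-τ) * Y ρ + φ (R - ρ) := by
        rw [← hpow]; field_simp
      calc (R - ρ) * deriv Y ρ
          ≤ (R - ρ) * ((1/(R - ρ) + C₀ * (R - ρ) ^ (-1 - τ)) * Y ρ + φ (R - ρ) / (R - ρ)) :=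
            mul_le_mul_of_nonneg_left hi hrpos.le
        _ = _ := h10
    have hderiv_eq : deriv H ρ = ψ (R - ρ) -
        Real.exp (-A ρ) * ((R - ρ) * deriv Y ρ - Y ρ - C₀ * (R - ρ) ^ (-τ) * Y ρ) := by
      rw [(hHd ρ hρ).deriv, hgr, ← hpow]; ring
    have hE0 : (0:ℝ) < Real.exp (-A ρ) := Real.exp_pos _
    have hE1 : Real.exp (-A ρ) ≤ 1 := by
      rw [Real.exp_le_one_iff]
      exact neg_nonpos.mpr (hAnn ρ hρ')
    have hφr : 0 ≤ φ (R - ρ) := hφ0 _ (hmem ρ hρ')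
    have hBle : (R - ρ) * deriv Y ρ - Y ρ - C₀ * (R - ρ) ^ (-τ) * Y ρ ≤ φ (R - ρ) := by
      linarith
    have h11 : Real.exp (-A ρ) * ((R - ρ) * deriv Y ρ - Y ρ - C₀ * (R - ρ) ^ (-τ) * Y ρ)
        ≤ Real.exp (-A ρ) * φ (R - ρ) := mul_le_mul_of_nonneg_left hBle hE0.le
    have h12 : Real.exp (-A ρ) * φ (R - ρ) ≤ φ (R - ρ) := by
      nlinarith
    rw [hderiv_eq, hψeq _ (hmem ρ hρ')]
    linarith
  have hHmono : MonotoneOn H (Icc 0 (R - rstar)) := by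
    apply monotoneOn_of_deriv_nonneg (convex_Icc _ _) hHc
    · intro x hx
      rw [interior_Icc] at hx
      exact ((hHd x hx).differentiableAt).differentiableWithinAt
    · intro x hx
      rw [interior_Icc] at hx
      exact hHderiv_nonneg x hx
  -- H 0 = 0
  have hH0 : H 0 = 0 := by
    simp only [hHdef, hWdef, hΦdef, sub_zero, intervalIntegral.integral_same, hY00]
    ring
  -- conclude
  intro ρ hρ
  have h0mem : (0:ℝ) ∈ Icc (0:ℝ) (R - rstar) := ⟨le_refl _, by linarith [hρ.1, hρ.2]⟩
  have hHρ : 0 ≤ H ρ := by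
    have := hHmono h0mem hρ hρ.1
    rw [hH0] at this
    exact this
  have hkey : Real.exp (-A ρ) * ((R - ρ) * Y ρ) ≤ Φ ρ := by
    simp only [hHdef, hWdef] at hHρ
    linarith
  have hE0 : (0:ℝ) < Real.exp (-A ρ) := Real.exp_pos _
  have h13 : (R - ρ) * Y ρ ≤ Real.exp (A ρ) * Φ ρ := by
    have h := mul_le_mul_of_nonneg_left hkey (Real.exp_pos (A ρ)).le
    rwa [← mul_assoc, ← Real.exp_add, add_neg_cancel, Real.exp_zero, one_mul] at h
  have h14 : Real.exp (A ρ) * Φ ρ ≤ Real.exp (C₀ * r₁ ^ (-τ) / τ) * Φ ρ :=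
    mul_le_mul_of_nonneg_right (Real.exp_le_exp.mpr (hAle ρ hρ)) (hΦnn ρ hρ)
  have hΦeq : Φ ρ = ∫ σ in (R - ρ)..R, φ σ := by
    apply intervalIntegral.integral_congr
    intro σ hσ
    rw [Set.uIcc_of_le (hmem ρ hρ).2] at hσ
    exact hψeq σ ⟨le_trans (hmem ρ hρ).1 hσ.1, hσ.2⟩
  rw [← hΦeq]
  linarith
end

section
/- Fix m > 0 and δ₀ > 0, and let χ : ℝ → ℝ be continuous with 0 ≤ χ ≤ 1, χ(x) = 0 for x ≤ 1, and χ(x) = 1 for x ≥ 2. For T ∈ ℝ set δ(T) := δ₀·exp(−T/(4m)), and for r > 2m set F(T, r) := T + r + 2m·log(δ(T)/m) + 2m·∫_2^{(r−2m)/δ(T)} χ(y)/y dy. Then for every fixed r > 2m, the function T ↦ F(T, r) is strictly monotone increasing and surjective onto ℝ; in particular it is a bijection from ℝ to ℝ. -/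
/-- The shrinking transition width `δ(T) = δ₀ e^{−T/(4m)}`. -/
noncomputable def schwDelta (m δ₀ T : ℝ) : ℝ := δ₀ * Real.exp (-T / (4 * m))

/-- The graph function of the horizon-penetrating Schwarzschild hypersurfaces
`Σ_T = {v = F(T, r)}` in ingoing Eddington–Finkelstein coordinates. -/
noncomputable def schwF (m δ₀ : ℝ) (χ : ℝ → ℝ) (T r : ℝ) : ℝ :=
  T + r + 2 * m * Real.log (schwDelta m δ₀ T / m)
    + 2 * m * ∫ y in (2:ℝ)..((r - 2 * m) / schwDelta m δ₀ T), χ y / y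

/-- For each fixed `r > 2m`, the map `T ↦ F(T, r)` is strictly increasing and
surjective onto `ℝ`; in particular it is a bijection. This is what makes the
horizon-penetrating hypersurfaces `Σ_T` a foliation. -/
theorem schwF_time_bijective (m δ₀ : ℝ) (hm : 0 < m) (hδ₀ : 0 < δ₀)
    (χ : ℝ → ℝ) (hχc : Continuous χ) (hχ01 : ∀ x, 0 ≤ χ x ∧ χ x ≤ 1)
    (hχ0 : ∀ x : ℝ, x ≤ 1 → χ x = 0) (hχ1 : ∀ x : ℝ, 2 ≤ x → χ x = 1) :
    ∀ r : ℝ, 2 * m < r →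
      StrictMono (fun T => schwF m δ₀ χ T r) ∧
      Function.Surjective (fun T => schwF m δ₀ χ T r) ∧
      Function.Bijective (fun T => schwF m δ₀ χ T r) := by
  intro r hr
  set g : ℝ → ℝ := fun y => χ y / y with hg_def
  have hg0 : ∀ y, 0 ≤ g y := by
    intro y
    rcases le_or_gt y 0 with h | h
    · simp [hg_def, hχ0 y (h.trans zero_le_one)]
    · exact div_nonneg (hχ01 y).1 h.le
  have hgc : Continuous g := by
    rw [continuous_iff_continuousAt]
    intro y
    rcases lt_or_ge y 1 with h | h
    · have hev : g =ᶠ[nhds y] fun _ => (0:ℝ) := by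
        filter_upwards [eventually_lt_nhds h] with z hz
        simp [hg_def, hχ0 z hz.le]
      exact continuousAt_const.congr hev.symm
    · have hy : y ≠ 0 := by positivity
      exact (hχc.continuousAt).div continuousAt_id hy
  have hgint : ∀ a b : ℝ, IntervalIntegrable g MeasureTheory.volume a b :=
    fun a b => hgc.intervalIntegrable a b
  set G : ℝ → ℝ := fun u => ∫ y in (2:ℝ)..u, g y with hG_def
  have hGc : Continuous G := intervalIntegral.continuous_primitive hgint 2
  have hGmono : Monotone G := by
    intro a b hab
    have h1 : G b - G a = ∫ y in a..b, g y := by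
      rw [hG_def]
      exact intervalIntegral.integral_interval_sub_left (hgint 2 b) (hgint 2 a)
    have h2 : 0 ≤ ∫ y in a..b, g y :=
      intervalIntegral.integral_nonneg hab (fun x _ => hg0 x)
    linarith
  set u : ℝ → ℝ := fun T => (r - 2 * m) / schwDelta m δ₀ T with hu_def
  have hδpos : ∀ T, 0 < schwDelta m δ₀ T := fun T => mul_pos hδ₀ (Real.exp_pos _)
  have humono : Monotone u := by
    intro T₁ T₂ h
    have h1 : schwDelta m δ₀ T₂ ≤ schwDelta m δ₀ T₁ := by
      unfold schwDelta
      have : -T₂ / (4 * m) ≤ -T₁ / (4 * m) := (div_le_div_iff_of_pos_right (by positivity)).2 (by linarith)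
      exact mul_le_mul_of_nonneg_left (Real.exp_le_exp.2 this) hδ₀.le
    simp only [hu_def]
    gcongr
    · exact hδpos T₂
  have huc : Continuous u := by
    apply continuous_const.div
    · unfold schwDelta
      fun_prop
    · exact fun T => (hδpos T).ne'
  -- key reformulation
  have hF : ∀ T, schwF m δ₀ χ T r
      = T / 2 + (r + 2 * m * Real.log (δ₀ / m)) + 2 * m * G (u T) := by
    intro T
    have hlog : Real.log (schwDelta m δ₀ T / m)
        = Real.log (δ₀ / m) + (-T / (4 * m)) := by
      unfold schwDelta
      rw [Real.log_div (by positivity) hm.ne', Real.log_mul hδ₀.ne' (Real.exp_ne_zero _),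
        Real.log_exp, Real.log_div hδ₀.ne' hm.ne']
      ring
    have hmul : 2 * m * (-T / (4 * m)) = -T / 2 := by
      field_simp
      ring
    unfold schwF
    rw [hlog]
    simp only [hG_def, hu_def, hg_def]
    rw [mul_add, hmul]
    ring
  have hkey : ∀ T₁ T₂ : ℝ, T₁ ≤ T₂ →
      (T₂ - T₁) / 2 ≤ schwF m δ₀ χ T₂ r - schwF m δ₀ χ T₁ r := by
    intro T₁ T₂ h
    have hG : G (u T₁) ≤ G (u T₂) := hGmono (humono h)
    have : 2 * m * G (u T₁) ≤ 2 * m * G (u T₂) :=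
      mul_le_mul_of_nonneg_left hG (by positivity)
    rw [hF T₁, hF T₂]
    linarith
  have hsm : StrictMono (fun T => schwF m δ₀ χ T r) := by
    intro T₁ T₂ h
    have := hkey T₁ T₂ h.le
    simp only
    linarith
  have hFc : Continuous (fun T => schwF m δ₀ χ T r) := by
    have : (fun T => schwF m δ₀ χ T r)
        = fun T => T / 2 + (r + 2 * m * Real.log (δ₀ / m)) + 2 * m * G (u T) :=
      funext hF
    rw [this]
    exact ((continuous_id.div_const 2).add continuous_const).add
      (continuous_const.mul (hGc.comp huc))
  have htop : Filter.Tendsto (fun T => schwF m δ₀ χ T r) Filter.atTop Filter.atTop := by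
    apply Filter.tendsto_atTop_mono' _ (f₁ := fun T => schwF m δ₀ χ 0 r + T / 2)
    · filter_upwards [Filter.eventually_ge_atTop (0:ℝ)] with T hT
      have := hkey 0 T hT
      linarith
    · exact Filter.tendsto_atTop_add_const_left _ _
        (Filter.tendsto_id.atTop_div_const two_pos)
  have hbot : Filter.Tendsto (fun T => schwF m δ₀ χ T r) Filter.atBot Filter.atBot := by
    apply Filter.tendsto_atBot_mono' _ (f₁ := fun T => schwF m δ₀ χ 0 r + T / 2)
    · filter_upwards [Filter.eventually_le_atBot (0:ℝ)] with T hT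
      have := hkey T 0 hT
      linarith
    · exact Filter.tendsto_atBot_add_const_left _ _
        (Filter.tendsto_id.atBot_div_const two_pos)
  have hsurj : Function.Surjective (fun T => schwF m δ₀ χ T r) :=
    Continuous.surjective hFc htop hbot
  exact ⟨hsm, hsurj, hsm.injective, hsurj⟩
end
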